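/- Let f : {-1,1}^n → {0,1} with E f = a and β := |f̂_{{1}}| ≤ a. Then W_1[f] ≤ β² + (√(W^{(n)}(a) − a²) + √(W^{(n−1)}(a − β)))², where W^{(m)}(t) := max{ W_1[g] : g : {-1,1}^m → {0,1}, E g = t }. -/

import Mathlib

open Finset

noncomputable def sgn (b : Bool) : ℝ := if b then 1 else -1

noncomputable def bexp (n : ℕ) (g : (Fin n → Bool) → ℝ) : ℝ :=
  (∑ x : Fin n → Bool, g x) / 2 ^ n

noncomputable def fcoef (n : ℕ) (f : (Fin n → Bool) → ℝ) (S : Finset (Fin n)) : ℝ :=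
  bexp n (fun x => f x * ∏ i ∈ S, sgn (x i))

/-- First-order Fourier weight `W₁[f]`. -/
noncomputable def Wone (n : ℕ) (f : (Fin n → Bool) → ℝ) : ℝ :=
  ∑ i : Fin n, (fcoef n f {i}) ^ 2

/-- `W^{(m)}(t)`: the maximal first-order weight over Boolean functions on the
`m`-cube with mean `t`. -/
noncomputable def Wmax (m : ℕ) (t : ℝ) : ℝ :=
  sSup {w | ∃ g : (Fin m → Bool) → ℝ,
    (∀ x, g x = 0 ∨ g x = 1) ∧ bexp m g = t ∧ w = Wone m g}

-- basics
lemma sgn_not (b : Bool) : sgn (!b) = - sgn b := by cases b <;> simp [sgn]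

lemma abs_sgn (b : Bool) : |sgn b| = 1 := by cases b <;> simp [sgn]

lemma card_cube (m : ℕ) : (Finset.univ : Finset (Fin m → Bool)).card = 2 ^ m := by
  simp [Finset.card_univ]

lemma sum_cube_succ {m : ℕ} (F : (Fin (m+1) → Bool) → ℝ) :
    ∑ x : Fin (m+1) → Bool, F x
      = (∑ y : Fin m → Bool, F (Fin.cons true y)) + ∑ y : Fin m → Bool, F (Fin.cons false y) := by
  rw [← Equiv.sum_comp (Fin.consEquiv (fun _ => Bool)) F]
  rw [Fintype.sum_prod_type, Fintype.sum_bool]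
  rfl

lemma bexp_succ {m : ℕ} (f : (Fin (m+1) → Bool) → ℝ) :
    bexp (m+1) f
      = (bexp m (fun y => f (Fin.cons true y)) + bexp m (fun y => f (Fin.cons false y))) / 2 := by
  unfold bexp
  rw [sum_cube_succ, pow_succ]
  ring

lemma fcoef_zero {m : ℕ} (f : (Fin (m+1) → Bool) → ℝ) :
    fcoef (m+1) f {0}
      = (bexp m (fun y => f (Fin.cons true y)) - bexp m (fun y => f (Fin.cons false y))) / 2 := by
  unfold fcoef bexp
  rw [sum_cube_succ]
  simp only [Finset.prod_singleton, Fin.cons_zero, sgn]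
  simp only [if_true, if_false, mul_one, mul_neg, Bool.false_eq_true]
  rw [Finset.sum_neg_distrib, pow_succ]
  ring

lemma fcoef_succ {m : ℕ} (f : (Fin (m+1) → Bool) → ℝ) (i : Fin m) :
    fcoef (m+1) f {Fin.succ i}
      = (fcoef m (fun y => f (Fin.cons true y)) {i} + fcoef m (fun y => f (Fin.cons false y)) {i}) / 2 := by
  unfold fcoef bexp
  rw [sum_cube_succ]
  simp only [Finset.prod_singleton, Fin.cons_succ]
  rw [pow_succ]
  ring

lemma Wone_succ {m : ℕ} (f : (Fin (m+1) → Bool) → ℝ) :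
    Wone (m+1) f = fcoef (m+1) f {0} ^ 2 + ∑ i : Fin m, fcoef (m+1) f {Fin.succ i} ^ 2 := by
  unfold Wone
  rw [Fin.sum_univ_succ]

-- indicator
noncomputable def ind {m : ℕ} (A : Finset (Fin m → Bool)) : (Fin m → Bool) → ℝ :=
  fun x => if x ∈ A then 1 else 0

lemma ind_bool {m : ℕ} (A : Finset (Fin m → Bool)) : ∀ x, ind A x = 0 ∨ ind A x = 1 := by
  intro x; unfold ind; split <;> simp

lemma sum_ind_mul {m : ℕ} (A : Finset (Fin m → Bool)) (w : (Fin m → Bool) → ℝ) :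
    ∑ x : Fin m → Bool, ind A x * w x = ∑ x ∈ A, w x := by
  unfold ind
  simp only [ite_mul, one_mul, zero_mul]
  rw [Finset.sum_ite_mem, Finset.univ_inter]

lemma bexp_ind {m : ℕ} (A : Finset (Fin m → Bool)) : bexp m (ind A) = A.card / 2 ^ m := by
  unfold bexp
  have : ∑ x : Fin m → Bool, ind A x = ∑ x : Fin m → Bool, ind A x * 1 := by simp
  rw [this, sum_ind_mul]
  simp

lemma fcoef_ind {m : ℕ} (A : Finset (Fin m → Bool)) (i : Fin m) :
    fcoef m (ind A) {i} = (∑ x ∈ A, sgn (x i)) / 2 ^ m := by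
  unfold fcoef bexp
  simp only [Finset.prod_singleton]
  rw [sum_ind_mul]

lemma boolean_eq_ind {m : ℕ} {g : (Fin m → Bool) → ℝ} (hg : ∀ x, g x = 0 ∨ g x = 1) :
    g = ind (Finset.univ.filter (fun x => g x = 1)) := by
  funext x
  rcases hg x with h | h <;> simp [ind, h]

-- linearity
lemma bexp_sub {m : ℕ} (u v : (Fin m → Bool) → ℝ) :
    bexp m (fun x => u x - v x) = bexp m u - bexp m v := by
  unfold bexp; rw [Finset.sum_sub_distrib]; ring

lemma fcoef_sub {m : ℕ} (u v : (Fin m → Bool) → ℝ) (S : Finset (Fin m)) :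
    fcoef m (fun x => u x - v x) S = fcoef m u S - fcoef m v S := by
  unfold fcoef
  have : (fun x => (u x - v x) * ∏ i ∈ S, sgn (x i))
      = fun x => (u x * ∏ i ∈ S, sgn (x i)) - (v x * ∏ i ∈ S, sgn (x i)) := by
    funext x; ring
  rw [this, bexp_sub]

lemma sum_sgn {m : ℕ} (i : Fin m) : ∑ x : Fin m → Bool, sgn (x i) = 0 := by
  have hinv : Function.Involutive (fun x : Fin m → Bool => fun j => !(x j)) := by
    intro x; funext j; simp
  have h := Equiv.sum_comp hinv.toPerm (fun x : Fin m → Bool => sgn (x i))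
  simp only [Function.Involutive.coe_toPerm] at h
  simp only [sgn_not, Finset.sum_neg_distrib] at h
  linarith

lemma bexp_one {m : ℕ} : bexp m (fun _ : Fin m → Bool => (1:ℝ)) = 1 := by
  unfold bexp
  rw [Finset.sum_const, card_cube]
  simp

lemma bexp_oneminus {m : ℕ} (g : (Fin m → Bool) → ℝ) :
    bexp m (fun x => 1 - g x) = 1 - bexp m g := by
  rw [bexp_sub, bexp_one]

lemma fcoef_oneminus {m : ℕ} (g : (Fin m → Bool) → ℝ) (i : Fin m) :
    fcoef m (fun x => 1 - g x) {i} = - fcoef m g {i} := by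
  rw [fcoef_sub]
  have : fcoef m (fun _ => (1:ℝ)) {i} = 0 := by
    unfold fcoef bexp
    simp only [Finset.prod_singleton, one_mul]
    rw [sum_sgn]
    simp
  rw [this]; ring

lemma Wone_oneminus {m : ℕ} (g : (Fin m → Bool) → ℝ) :
    Wone m (fun x => 1 - g x) = Wone m g := by
  unfold Wone
  exact Finset.sum_congr rfl fun i _ => by rw [fcoef_oneminus]; ring

lemma oneminus_bool {m : ℕ} {g : (Fin m → Bool) → ℝ} (hg : ∀ x, g x = 0 ∨ g x = 1) :
    ∀ x, 1 - g x = 0 ∨ 1 - g x = 1 := by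
  intro x; rcases hg x with h | h <;> simp [h]

-- Wmax facts
lemma Wone_nonneg (m : ℕ) (g : (Fin m → Bool) → ℝ) : 0 ≤ Wone m g :=
  Finset.sum_nonneg fun _ _ => sq_nonneg _

lemma fcoef_sq_le_one {m : ℕ} {g : (Fin m → Bool) → ℝ} (hg : ∀ x, g x = 0 ∨ g x = 1)
    (S : Finset (Fin m)) : fcoef m g S ^ 2 ≤ 1 := by
  have habs : |fcoef m g S| ≤ 1 := by
    unfold fcoef bexp
    rw [abs_div, abs_of_nonneg (by positivity : (0:ℝ) ≤ 2 ^ m)]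
    rw [div_le_one (by positivity)]
    calc |∑ x : Fin m → Bool, g x * ∏ i ∈ S, sgn (x i)|
        ≤ ∑ x : Fin m → Bool, |g x * ∏ i ∈ S, sgn (x i)| := Finset.abs_sum_le_sum_abs _ _
      _ ≤ ∑ _x : Fin m → Bool, (1:ℝ) := by
          apply Finset.sum_le_sum
          intro x _
          rw [abs_mul, Finset.abs_prod]
          have h1 : |g x| ≤ 1 := by rcases hg x with h | h <;> simp [h]
          have h2 : ∏ i ∈ S, |sgn (x i)| = 1 := by
            simp [abs_sgn]
          rw [h2, mul_one]; exact h1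
      _ = 2 ^ m := by rw [Finset.sum_const, card_cube]; simp
  calc fcoef m g S ^ 2 = |fcoef m g S| ^ 2 := (sq_abs _).symm
    _ ≤ 1 ^ 2 := by apply pow_le_pow_left₀ (abs_nonneg _) habs
    _ = 1 := one_pow 2

lemma wmax_bdd (m : ℕ) (t : ℝ) :
    BddAbove {w | ∃ g : (Fin m → Bool) → ℝ,
      (∀ x, g x = 0 ∨ g x = 1) ∧ bexp m g = t ∧ w = Wone m g} := by
  refine ⟨m, ?_⟩
  rintro w ⟨g, hg, -, rfl⟩
  calc Wone m g ≤ ∑ _i : Fin m, (1:ℝ) := Finset.sum_le_sum fun i _ => fcoef_sq_le_one hg _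
    _ = m := by simp

lemma le_wmax {m : ℕ} {g : (Fin m → Bool) → ℝ} {t : ℝ} (hg : ∀ x, g x = 0 ∨ g x = 1)
    (hm : bexp m g = t) : Wone m g ≤ Wmax m t :=
  le_csSup (wmax_bdd m t) ⟨g, hg, hm, rfl⟩

lemma wmax_nonneg {m : ℕ} {g : (Fin m → Bool) → ℝ} {t : ℝ} (hg : ∀ x, g x = 0 ∨ g x = 1)
    (hm : bexp m g = t) : 0 ≤ Wmax m t :=
  le_trans (Wone_nonneg m g) (le_wmax hg hm)

lemma wmax_le {m : ℕ} {t X : ℝ} (h0 : 0 ≤ X)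
    (h : ∀ g : (Fin m → Bool) → ℝ, (∀ x, g x = 0 ∨ g x = 1) → bexp m g = t → Wone m g ≤ X) :
    Wmax m t ≤ X := by
  apply Real.sSup_le _ h0
  rintro w ⟨g, hg, hm, rfl⟩
  exact h g hg hm

lemma wmax_compl_le {m : ℕ} {t : ℝ} (g₀ : (Fin m → Bool) → ℝ)
    (hg₀ : ∀ x, g₀ x = 0 ∨ g₀ x = 1) (hm₀ : bexp m g₀ = t) :
    Wmax m (1 - t) ≤ Wmax m t := by
  apply wmax_le (wmax_nonneg hg₀ hm₀)
  intro g hg hm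
  have h1 : bexp m (fun x => 1 - g x) = t := by
    rw [bexp_oneminus, hm]; ring
  have h2 := le_wmax (oneminus_bool hg) h1
  rwa [Wone_oneminus] at h2

lemma wmax_mono {m : ℕ} {s t : ℝ} (h : (Fin m → Bool) → ℝ)
    (hhB : ∀ x, h x = 0 ∨ h x = 1) (hht : bexp m h = t)
    (hst : s ≤ t) (hhalf : 2 * t ≤ 1) : Wmax m s ≤ Wmax m t := by
  classical
  apply wmax_le (wmax_nonneg hhB hht)
  intro g hg hgs
  have hgind : g = ind (Finset.univ.filter (fun x => g x = 1)) := boolean_eq_ind hg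
  have hhind : h = ind (Finset.univ.filter (fun x => h x = 1)) := boolean_eq_ind hhB
  set A : Finset (Fin m → Bool) := Finset.univ.filter (fun x => g x = 1) with hA
  set A' : Finset (Fin m → Bool) := Finset.univ.filter (fun x => h x = 1) with hA'
  have hpow : (0:ℝ) < 2 ^ m := by positivity
  have hKs : (A.card : ℝ) = s * 2 ^ m := by
    rw [hgind, bexp_ind] at hgs
    field_simp at hgs ⊢; linarith
  have hK't : (A'.card : ℝ) = t * 2 ^ m := by
    rw [hhind, bexp_ind] at hht
    field_simp at hht ⊢; linarith
  have hKK' : A.card ≤ A'.card := by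
    have : (A.card : ℝ) ≤ A'.card := by
      rw [hKs, hK't]
      exact mul_le_mul_of_nonneg_right hst hpow.le
    exact_mod_cast this
  have hK'half : 2 * A'.card ≤ 2 ^ m := by
    have : (2 * A'.card : ℝ) ≤ 2 ^ m := by
      push_cast
      rw [hK't]; nlinarith
    exact_mod_cast this
  set c : Fin m → ℝ := fun i => fcoef m g {i} with hc
  set L : (Fin m → Bool) → ℝ := fun x => ∑ i : Fin m, c i * sgn (x i) with hL
  set P : Finset (Fin m → Bool) := Finset.univ.filter (fun x => 0 ≤ L x) with hP
  have hLneg : ∀ x : Fin m → Bool, L (fun j => !(x j)) = - L x := by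
    intro x
    simp only [hL, sgn_not, mul_neg]
    rw [Finset.sum_neg_distrib]
  have hPcard : 2 ^ m ≤ 2 * P.card := by
    have hinj : (Finset.univ.filter (fun x : Fin m → Bool => ¬ 0 ≤ L x)).card ≤ P.card := by
      apply Finset.card_le_card_of_injOn (fun x => fun j => !(x j))
      · intro x hx
        rw [hP]
        simp only [Finset.mem_coe, Finset.mem_filter, Finset.mem_univ, true_and] at hx ⊢
        show 0 ≤ L (fun j => !(x j))
        rw [hLneg x]
        linarith [lt_of_not_ge hx]
      · intro x _ y _ hxy
        funext j
        have := congrFun hxy j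
        simpa using this
    have hsplit : P.card + (Finset.univ.filter (fun x : Fin m → Bool => ¬ 0 ≤ L x)).card
        = 2 ^ m := by
      rw [← card_cube m]
      exact Finset.card_filter_add_card_filter_not _
    omega
  have hsd : A'.card - A.card ≤ (P \ A).card := by
    have h1 : P.card - A.card ≤ (P \ A).card := Finset.le_card_sdiff A P
    omega
  obtain ⟨E, hEsub, hEcard⟩ := Finset.exists_subset_card_eq hsd
  have hdisj : Disjoint A E := by
    rw [Finset.disjoint_right]
    intro x hxE
    exact (Finset.mem_sdiff.mp (hEsub hxE)).2
  set B : Finset (Fin m → Bool) := A ∪ E with hB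
  have hBcard : B.card = A'.card := by
    rw [hB, Finset.card_union_of_disjoint hdisj, hEcard]
    omega
  have hBmean : bexp m (ind B) = t := by
    rw [bexp_ind, hBcard]
    rw [eq_comm, eq_div_iff hpow.ne']
    linarith [hK't]
  set e : Fin m → ℝ := fun i => (∑ x ∈ E, sgn (x i)) / 2 ^ m with he
  have hcoef : ∀ i, fcoef m (ind B) {i} = c i + e i := by
    intro i
    rw [fcoef_ind, hB, Finset.sum_union hdisj, add_div, hc]
    simp only
    rw [hgind, fcoef_ind]
  have hkey : 0 ≤ ∑ i : Fin m, c i * e i := by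
    have h1 : ∀ i : Fin m, c i * e i = ∑ x ∈ E, c i * sgn (x i) / 2 ^ m := fun i => by
      rw [he]; simp only
      rw [eq_comm, ← Finset.sum_div, ← Finset.mul_sum, mul_div_assoc]
    have h2 : ∀ x : Fin m → Bool, L x / 2 ^ m = ∑ i : Fin m, c i * sgn (x i) / 2 ^ m := fun x => by
      rw [hL]; simp only
      rw [Finset.sum_div]
    have hswap : ∑ i : Fin m, c i * e i = ∑ x ∈ E, L x / 2 ^ m :=
      calc ∑ i : Fin m, c i * e i = ∑ i : Fin m, ∑ x ∈ E, c i * sgn (x i) / 2 ^ m :=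
            Finset.sum_congr rfl fun i _ => h1 i
        _ = ∑ x ∈ E, ∑ i : Fin m, c i * sgn (x i) / 2 ^ m := Finset.sum_comm
        _ = ∑ x ∈ E, L x / 2 ^ m := Finset.sum_congr rfl fun x _ => (h2 x).symm
    rw [hswap]
    apply Finset.sum_nonneg
    intro x hx
    have hxP : x ∈ P := (Finset.mem_sdiff.mp (hEsub hx)).1
    rw [hP] at hxP
    exact div_nonneg (Finset.mem_filter.mp hxP).2 (by positivity)
  have hWg : Wone m g = ∑ i : Fin m, c i ^ 2 := by
    unfold Wone
    exact Finset.sum_congr rfl fun i _ => by rw [hc]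
  have hWB : Wone m (ind B) = ∑ i : Fin m, (c i + e i) ^ 2 := by
    unfold Wone
    exact Finset.sum_congr rfl fun i _ => by rw [hcoef i]
  have hW : Wone m g ≤ Wone m (ind B) := by
    rw [hWg, hWB]
    by_cases hz : ∑ i : Fin m, c i ^ 2 = 0
    · rw [hz]
      exact Finset.sum_nonneg fun i _ => sq_nonneg _
    · have hpos : 0 < ∑ i : Fin m, c i ^ 2 :=
        lt_of_le_of_ne (Finset.sum_nonneg fun i _ => sq_nonneg _) (Ne.symm hz)
      have h1 : ∑ i : Fin m, c i ^ 2 ≤ ∑ i : Fin m, c i * (c i + e i) := by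
        have hexp : ∑ i : Fin m, c i * (c i + e i)
            = ∑ i : Fin m, c i ^ 2 + ∑ i : Fin m, c i * e i := by
          rw [← Finset.sum_add_distrib]
          exact Finset.sum_congr rfl fun i _ => by ring
        rw [hexp]; linarith
      have hcs := Finset.sum_mul_sq_le_sq_mul_sq Finset.univ c (fun i => c i + e i)
      beta_reduce at hcs
      nlinarith [h1, hcs, hpos]
  exact le_trans hW (le_wmax (ind_bool B) hBmean)

-- Minkowski (ℓ² triangle) on Fin m
lemma mink {m : ℕ} (u v : Fin m → ℝ) :
    Real.sqrt (∑ i : Fin m, (u i + v i) ^ 2)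
      ≤ Real.sqrt (∑ i : Fin m, u i ^ 2) + Real.sqrt (∑ i : Fin m, v i ^ 2) := by
  have hu : 0 ≤ ∑ i : Fin m, u i ^ 2 := Finset.sum_nonneg fun i _ => sq_nonneg _
  have hv : 0 ≤ ∑ i : Fin m, v i ^ 2 := Finset.sum_nonneg fun i _ => sq_nonneg _
  have h1 : ∑ i : Fin m, u i * v i
      ≤ Real.sqrt (∑ i : Fin m, u i ^ 2) * Real.sqrt (∑ i : Fin m, v i ^ 2) := by
    have hcs := Finset.sum_mul_sq_le_sq_mul_sq Finset.univ u v
    calc ∑ i : Fin m, u i * v i ≤ |∑ i : Fin m, u i * v i| := le_abs_self _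
      _ = Real.sqrt ((∑ i : Fin m, u i * v i) ^ 2) := (Real.sqrt_sq_eq_abs _).symm
      _ ≤ Real.sqrt ((∑ i : Fin m, u i ^ 2) * ∑ i : Fin m, v i ^ 2) := Real.sqrt_le_sqrt hcs
      _ = _ := Real.sqrt_mul hu _
  have hexp : ∑ i : Fin m, (u i + v i) ^ 2
      = ∑ i : Fin m, u i ^ 2 + 2 * (∑ i : Fin m, u i * v i) + ∑ i : Fin m, v i ^ 2 := by
    rw [Finset.mul_sum, ← Finset.sum_add_distrib, ← Finset.sum_add_distrib]
    exact Finset.sum_congr rfl fun i _ => by ring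
  have h2 : ∑ i : Fin m, (u i + v i) ^ 2
      ≤ (Real.sqrt (∑ i : Fin m, u i ^ 2) + Real.sqrt (∑ i : Fin m, v i ^ 2)) ^ 2 := by
    rw [hexp, add_sq, Real.sq_sqrt hu, Real.sq_sqrt hv]
    linarith
  calc Real.sqrt (∑ i : Fin m, (u i + v i) ^ 2)
      ≤ Real.sqrt ((Real.sqrt (∑ i : Fin m, u i ^ 2) + Real.sqrt (∑ i : Fin m, v i ^ 2)) ^ 2) :=
        Real.sqrt_le_sqrt h2
    _ = _ := Real.sqrt_sq (by positivity)

lemma sqrt_sum_half {m : ℕ} (w : Fin m → ℝ) :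
    Real.sqrt (∑ i : Fin m, (w i / 2) ^ 2) = Real.sqrt (∑ i : Fin m, w i ^ 2) / 2 := by
  have h : ∑ i : Fin m, (w i / 2) ^ 2 = (∑ i : Fin m, w i ^ 2) / 4 := by
    rw [Finset.sum_div]
    exact Finset.sum_congr rfl fun i _ => by ring
  rw [h, show (4:ℝ) = 2 ^ 2 by norm_num,
    Real.sqrt_div (Finset.sum_nonneg fun i _ => sq_nonneg _), Real.sqrt_sq (by norm_num : (0:ℝ) ≤ 2)]

lemma main_aux (m : ℕ) (p q : (Fin m → Bool) → ℝ) (a β : ℝ)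
    (hpB : ∀ x, p x = 0 ∨ p x = 1) (hqB : ∀ x, q x = 0 ∨ q x = 1)
    (hbp : bexp m p = a + β) (hbq : bexp m q = a - β) (hβ0 : 0 ≤ β) :
    ∑ i : Fin m, ((fcoef m p {i} + fcoef m q {i}) / 2) ^ 2
      ≤ (Real.sqrt (Wmax (m+1) a - a ^ 2) + Real.sqrt (Wmax m (a - β))) ^ 2 := by
  classical
  have hS0 : 0 ≤ ∑ i : Fin m, ((fcoef m p {i} + fcoef m q {i}) / 2) ^ 2 :=
    Finset.sum_nonneg fun i _ => sq_nonneg _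
  have hsqB : Real.sqrt (Wone m q) ≤ Real.sqrt (Wmax m (a - β)) :=
    Real.sqrt_le_sqrt (le_wmax hqB hbq)
  have hsqP : Real.sqrt (Wone m p) ≤ Real.sqrt (Wmax m (a + β)) :=
    Real.sqrt_le_sqrt (le_wmax hpB hbp)
  suffices hsq : Real.sqrt (∑ i : Fin m, ((fcoef m p {i} + fcoef m q {i}) / 2) ^ 2)
      ≤ Real.sqrt (Wmax (m+1) a - a ^ 2) + Real.sqrt (Wmax m (a - β)) by
    calc ∑ i : Fin m, ((fcoef m p {i} + fcoef m q {i}) / 2) ^ 2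
        = Real.sqrt (∑ i : Fin m, ((fcoef m p {i} + fcoef m q {i}) / 2) ^ 2) ^ 2 :=
          (Real.sq_sqrt hS0).symm
      _ ≤ (Real.sqrt (Wmax (m+1) a - a ^ 2) + Real.sqrt (Wmax m (a - β))) ^ 2 :=
          pow_le_pow_left₀ (Real.sqrt_nonneg _) hsq 2
  rcases le_or_gt (bexp m p + bexp m q) 1 with hcase | hcase
  · -- Route 1 : a ≤ 1/2, explicit decomposition
    set A : Finset (Fin m → Bool) := Finset.univ.filter (fun x => p x = 1) with hA
    set A2 : Finset (Fin m → Bool) := Finset.univ.filter (fun x => q x = 1) with hA2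
    have hpind : p = ind A := boolean_eq_ind hpB
    have hqind : q = ind A2 := boolean_eq_ind hqB
    have hpow : (0:ℝ) < 2 ^ m := by positivity
    have hKp : (A.card : ℝ) = (a + β) * 2 ^ m := by
      rw [hpind, bexp_ind] at hbp
      field_simp at hbp ⊢; linarith
    have hKq : (A2.card : ℝ) = (a - β) * 2 ^ m := by
      rw [hqind, bexp_ind] at hbq
      field_simp at hbq ⊢; linarith
    have hsum_le : A.card + A2.card ≤ 2 ^ m := by
      have : ((A.card + A2.card : ℕ) : ℝ) ≤ 2 ^ m := by
        push_cast
        rw [hKp, hKq]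
        have h2a : (a + β) + (a - β) ≤ 1 := by
          rw [← hbp, ← hbq]; exact hcase
        nlinarith
      exact_mod_cast this
    obtain ⟨A', hAA', -, hA'card⟩ := Finset.exists_subsuperset_card_eq (Finset.subset_univ A)
      (Nat.le_add_right _ _) (by rw [card_cube]; exact hsum_le)
    have hg'mean : bexp m (ind A') = 2 * a := by
      rw [bexp_ind, hA'card]
      push_cast
      rw [hKp, hKq]
      field_simp; ring
    set h : (Fin m → Bool) → ℝ := fun x => ind A' x - p x with hh
    have hhB : ∀ x, h x = 0 ∨ h x = 1 := by
      intro x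
      rcases hpB x with hx | hx
      · rcases ind_bool A' x with h' | h' <;> simp [hh, hx, h']
      · have hxA : x ∈ A := by rw [hA]; exact Finset.mem_filter.mpr ⟨Finset.mem_univ x, hx⟩
        have hgx : ind A' x = 1 := by simp [ind, hAA' hxA]
        left; simp [hh, hgx, hx]
    have hbh : bexp m h = a - β := by
      rw [hh, bexp_sub, hg'mean, hbp]; ring
    have hch : ∀ i : Fin m, fcoef m h {i} = fcoef m (ind A') {i} - fcoef m p {i} := by
      intro i
      rw [hh]
      exact fcoef_sub (ind A') p {i}
    -- G on the (m+1)-cube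
    set G : (Fin (m+1) → Bool) → ℝ :=
      fun x => if x 0 = true then ind A' (Fin.tail x) else 0 with hG
    have hGB : ∀ x, G x = 0 ∨ G x = 1 := by
      intro x
      rw [hG]
      simp only
      split
      · exact ind_bool A' _
      · left; rfl
    have hGplus : (fun y => G (Fin.cons true y)) = ind A' := by
      funext y
      rw [hG]
      simp [Fin.cons_zero, Fin.tail_cons]
    have hGminus : (fun y => G (Fin.cons false y)) = (fun _ => (0:ℝ)) := by
      funext y
      rw [hG]
      simp [Fin.cons_zero]
    have hbexp0 : bexp m (fun _ : Fin m → Bool => (0:ℝ)) = 0 := by simp [bexp]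
    have hfcoef0 : ∀ i : Fin m, fcoef m (fun _ : Fin m → Bool => (0:ℝ)) {i} = 0 := by
      intro i; simp [fcoef, bexp]
    have hGmean : bexp (m+1) G = a := by
      rw [bexp_succ, hGplus, hGminus, hbexp0, hg'mean]; ring
    have hG0 : fcoef (m+1) G {0} = a := by
      rw [fcoef_zero, hGplus, hGminus, hbexp0, hg'mean]; ring
    have hGsucc : ∀ i : Fin m, fcoef (m+1) G {Fin.succ i} = fcoef m (ind A') {i} / 2 := by
      intro i
      rw [fcoef_succ, hGplus, hGminus, hfcoef0 i]; ring
    have hGsum : ∑ i : Fin m, (fcoef m (ind A') {i} / 2) ^ 2 ≤ Wmax (m+1) a - a ^ 2 := by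
      have hle := le_wmax hGB hGmean
      have hWG : Wone (m+1) G = a ^ 2 + ∑ i : Fin m, (fcoef m (ind A') {i} / 2) ^ 2 := by
        rw [Wone_succ, hG0]
        congr 1
        exact Finset.sum_congr rfl fun i _ => by rw [hGsucc i]
      linarith
    have hid : ∀ i : Fin m, (fcoef m p {i} + fcoef m q {i}) / 2
        = fcoef m (ind A') {i} / 2 + (fcoef m q {i} / 2 + (- fcoef m h {i}) / 2) := by
      intro i
      rw [hch i]; ring
    calc Real.sqrt (∑ i : Fin m, ((fcoef m p {i} + fcoef m q {i}) / 2) ^ 2)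
        = Real.sqrt (∑ i : Fin m,
            (fcoef m (ind A') {i} / 2 + (fcoef m q {i} / 2 + (- fcoef m h {i}) / 2)) ^ 2) := by
          congr 1
          exact Finset.sum_congr rfl fun i _ => by rw [hid i]
      _ ≤ Real.sqrt (∑ i : Fin m, (fcoef m (ind A') {i} / 2) ^ 2)
            + Real.sqrt (∑ i : Fin m, (fcoef m q {i} / 2 + (- fcoef m h {i}) / 2) ^ 2) :=
          mink _ _
      _ ≤ Real.sqrt (∑ i : Fin m, (fcoef m (ind A') {i} / 2) ^ 2)
            + (Real.sqrt (∑ i : Fin m, (fcoef m q {i} / 2) ^ 2)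
              + Real.sqrt (∑ i : Fin m, ((- fcoef m h {i}) / 2) ^ 2)) := by
          have := mink (fun i => fcoef m q {i} / 2) (fun i => (- fcoef m h {i}) / 2)
          linarith
      _ ≤ Real.sqrt (Wmax (m+1) a - a ^ 2) + Real.sqrt (Wmax m (a - β)) := by
          have e1 : Real.sqrt (∑ i : Fin m, (fcoef m (ind A') {i} / 2) ^ 2)
              ≤ Real.sqrt (Wmax (m+1) a - a ^ 2) := Real.sqrt_le_sqrt hGsum
          have e2 : Real.sqrt (∑ i : Fin m, (fcoef m q {i} / 2) ^ 2)
              = Real.sqrt (Wone m q) / 2 := sqrt_sum_half _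
          have e3 : Real.sqrt (∑ i : Fin m, ((- fcoef m h {i}) / 2) ^ 2)
              = Real.sqrt (Wone m h) / 2 := by
            rw [sqrt_sum_half]
            congr 2
            exact Finset.sum_congr rfl fun i _ => by ring
          have e4 : Real.sqrt (Wone m h) ≤ Real.sqrt (Wmax m (a - β)) :=
            Real.sqrt_le_sqrt (le_wmax hhB hbh)
          rw [e2, e3]
          linarith
  · -- Route 2 : a > 1/2
    have h2a : 1 < 2 * a := by
      have : bexp m p + bexp m q = 2 * a := by rw [hbp, hbq]; ring
      linarith
    have hchain : Wmax m (a + β) ≤ Wmax m (a - β) := by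
      have hc1 : Wmax m (a + β) ≤ Wmax m (1 - (a + β)) := by
        have hmem := wmax_compl_le (fun x => 1 - p x) (oneminus_bool hpB)
          (by rw [bexp_oneminus, hbp])
        rwa [sub_sub_cancel] at hmem
      rcases le_or_gt (2 * (a - β)) 1 with hhalf | hhalf
      · have hc2 : Wmax m (1 - (a + β)) ≤ Wmax m (a - β) :=
          wmax_mono q hqB hbq (by linarith) hhalf
        linarith
      · have hc2 : Wmax m (1 - (a + β)) ≤ Wmax m (1 - (a - β)) :=
          wmax_mono (fun x => 1 - q x) (oneminus_bool hqB)
            (by rw [bexp_oneminus, hbq]) (by linarith) (by linarith)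
        have hc3 : Wmax m (1 - (a - β)) ≤ Wmax m (a - β) := wmax_compl_le q hqB hbq
        linarith
    have hid : ∀ i : Fin m, (fcoef m p {i} + fcoef m q {i}) / 2
        = fcoef m p {i} / 2 + fcoef m q {i} / 2 := fun i => by ring
    have hBnn : 0 ≤ Real.sqrt (Wmax (m+1) a - a ^ 2) := Real.sqrt_nonneg _
    calc Real.sqrt (∑ i : Fin m, ((fcoef m p {i} + fcoef m q {i}) / 2) ^ 2)
        = Real.sqrt (∑ i : Fin m, (fcoef m p {i} / 2 + fcoef m q {i} / 2) ^ 2) := by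
          congr 1
          exact Finset.sum_congr rfl fun i _ => by rw [hid i]
      _ ≤ Real.sqrt (∑ i : Fin m, (fcoef m p {i} / 2) ^ 2)
            + Real.sqrt (∑ i : Fin m, (fcoef m q {i} / 2) ^ 2) := mink _ _
      _ = Real.sqrt (Wone m p) / 2 + Real.sqrt (Wone m q) / 2 := by
          rw [sqrt_sum_half, sqrt_sum_half]; rfl
      _ ≤ Real.sqrt (Wmax m (a + β)) / 2 + Real.sqrt (Wmax m (a - β)) / 2 := by linarith
      _ ≤ Real.sqrt (Wmax m (a - β)) / 2 + Real.sqrt (Wmax m (a - β)) / 2 := by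
          have := Real.sqrt_le_sqrt hchain
          linarith
      _ = Real.sqrt (Wmax m (a - β)) := by ring
      _ ≤ Real.sqrt (Wmax (m+1) a - a ^ 2) + Real.sqrt (Wmax m (a - β)) := by linarith

/-- `W₁[f] ≤ β² + (√(W^{(n)}(a) − a²) + √(W^{(n−1)}(a − β)))²`
for a Boolean `f` with mean `a` and `β = |f̂_{1}| ≤ a`. -/
theorem stmt13 (n : ℕ) (hn : 0 < n) (f : (Fin n → Bool) → ℝ) (a β : ℝ)
    (hf : ∀ x, f x = 0 ∨ f x = 1) (ha : bexp n f = a)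
    (hβ : β = |fcoef n f {⟨0, hn⟩}|) (hβa : β ≤ a) :
    Wone n f ≤ β ^ 2 +
      (Real.sqrt (Wmax n a - a ^ 2) + Real.sqrt (Wmax (n - 1) (a - β))) ^ 2 := by
  classical
  obtain ⟨m, rfl⟩ : ∃ m, n = m + 1 := ⟨n - 1, (Nat.succ_pred_eq_of_pos hn).symm⟩
  have h00 : (⟨0, hn⟩ : Fin (m+1)) = 0 := rfl
  rw [h00] at hβ
  simp only [Nat.add_sub_cancel]
  have hβ0 : 0 ≤ β := by rw [hβ]; exact abs_nonneg _
  have hc0sq : fcoef (m+1) f {0} ^ 2 = β ^ 2 := by rw [hβ, sq_abs]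
  have hmean := bexp_succ f
  rw [ha] at hmean
  have hzero := fcoef_zero f
  have hsum : ∀ i : Fin m, fcoef (m+1) f {Fin.succ i}
      = (fcoef m (fun y => f (Fin.cons true y)) {i}
          + fcoef m (fun y => f (Fin.cons false y)) {i}) / 2 := fcoef_succ f
  have hfpB : ∀ y, (fun y => f (Fin.cons true y)) y = 0 ∨ (fun y => f (Fin.cons true y)) y = 1 :=
    fun y => hf _
  have hfmB : ∀ y, (fun y => f (Fin.cons false y)) y = 0 ∨ (fun y => f (Fin.cons false y)) y = 1 :=
    fun y => hf _
  rw [Wone_succ, hc0sq]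
  have key : ∑ i : Fin m, fcoef (m+1) f {Fin.succ i} ^ 2
      ≤ (Real.sqrt (Wmax (m+1) a - a ^ 2) + Real.sqrt (Wmax m (a - β))) ^ 2 := by
    rcases le_or_gt 0 (fcoef (m+1) f {0}) with hs | hs
    · have hβval : β = (bexp m (fun y => f (Fin.cons true y))
          - bexp m (fun y => f (Fin.cons false y))) / 2 := by
        rw [hβ, abs_of_nonneg hs, hzero]
      have hbp : bexp m (fun y => f (Fin.cons true y)) = a + β := by
        rw [hβval]; linarith
      have hbq : bexp m (fun y => f (Fin.cons false y)) = a - β := by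
        rw [hβval]; linarith
      have hmain := main_aux m _ _ a β hfpB hfmB hbp hbq hβ0
      calc ∑ i : Fin m, fcoef (m+1) f {Fin.succ i} ^ 2
          = ∑ i : Fin m, ((fcoef m (fun y => f (Fin.cons true y)) {i}
              + fcoef m (fun y => f (Fin.cons false y)) {i}) / 2) ^ 2 :=
            Finset.sum_congr rfl fun i _ => by rw [hsum i]
        _ ≤ _ := hmain
    · have hβval : β = (bexp m (fun y => f (Fin.cons false y))
          - bexp m (fun y => f (Fin.cons true y))) / 2 := by
        rw [hβ, abs_of_neg hs, hzero]; ring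
      have hbp : bexp m (fun y => f (Fin.cons false y)) = a + β := by
        rw [hβval]; linarith
      have hbq : bexp m (fun y => f (Fin.cons true y)) = a - β := by
        rw [hβval]; linarith
      have hmain := main_aux m _ _ a β hfmB hfpB hbp hbq hβ0
      calc ∑ i : Fin m, fcoef (m+1) f {Fin.succ i} ^ 2
          = ∑ i : Fin m, ((fcoef m (fun y => f (Fin.cons false y)) {i}
              + fcoef m (fun y => f (Fin.cons true y)) {i}) / 2) ^ 2 :=
            Finset.sum_congr rfl fun i _ => by rw [hsum i]; ring
        _ ≤ _ := hmain
  linarith
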